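/- arXiv:1305.2400 — 2 statements merged into one kernel-verified Lean document; each statement's English description precedes it below -/
import Mathlib

section
/- If two 3×3 matrices A and B over R = k[x₀,x₁,x₂] have the same first two columns, say with rows (x₀,x₀,·), (x₁,0,·), (0,x₂,·), and the same determinant, then B = A·U for an upper triangular matrix U = [[1,0,a],[0,1,b],[0,0,1]] with a, b ∈ R of the appropriate degrees; in particular the cokernels of A and B as maps R³ → R³ are isomorphic. -/
open MvPolynomial

lemma primeX_aux {k : Type*} [Field k] (i : Fin 3) :
    Prime (X i : MvPolynomial (Fin 3) k) := by
  let e := (renameEquiv k (Equiv.swap i 0)).trans (finSuccEquiv k 2)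
  rw [← MulEquiv.prime_iff e.toMulEquiv]
  have h : e (X i) = Polynomial.X := by
    simp only [e, AlgEquiv.trans_apply, renameEquiv_apply, rename_X, Equiv.swap_apply_left]
    exact finSuccEquiv_X_zero
  rw [show e.toMulEquiv (X i) = e (X i) from rfl, h]
  exact Polynomial.prime_X

theorem same_det_implies_equivalent (k : Type*) [Field k]
    (p₀ p₁ p₂ q₀ q₁ q₂ : MvPolynomial (Fin 3) k)
    (A B : Matrix (Fin 3) (Fin 3) (MvPolynomial (Fin 3) k))
    (hA : A = !![X 0, X 0, p₀; X 1, 0, p₁; 0, X 2, p₂])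
    (hB : B = !![X 0, X 0, q₀; X 1, 0, q₁; 0, X 2, q₂])
    (hdet : A.det = B.det) :
    (∃ a b : MvPolynomial (Fin 3) k, B = A * !![1, 0, a; 0, 1, b; 0, 0, 1]) ∧
    Nonempty (((Fin 3 → MvPolynomial (Fin 3) k) ⧸ LinearMap.range A.mulVecLin) ≃ₗ[MvPolynomial (Fin 3) k]
      ((Fin 3 → MvPolynomial (Fin 3) k) ⧸ LinearMap.range B.mulVecLin)) := by
  subst hA hB
  simp [Matrix.det_fin_three] at hdet
  have hd1 : (X 1 : MvPolynomial (Fin 3) k) ∣ X 0 * X 2 * (q₁ - p₁) :=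
    ⟨X 2 * (q₀ - p₀) - X 0 * (q₂ - p₂), by linear_combination hdet⟩
  have hd2 : (X 2 : MvPolynomial (Fin 3) k) ∣ X 0 * X 1 * (q₂ - p₂) :=
    ⟨X 1 * (q₀ - p₀) - X 0 * (q₁ - p₁), by linear_combination hdet⟩
  have h1 : (X 1 : MvPolynomial (Fin 3) k) ∣ (q₁ - p₁) := by
    rcases ((primeX_aux 1).dvd_mul).mp hd1 with h | h
    · rcases ((primeX_aux 1).dvd_mul).mp h with h' | h' <;> rw [X_dvd_X] at h' <;>
        exact absurd h' (by decide)
    · exact h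
  have h2 : (X 2 : MvPolynomial (Fin 3) k) ∣ (q₂ - p₂) := by
    rcases ((primeX_aux 2).dvd_mul).mp hd2 with h | h
    · rcases ((primeX_aux 2).dvd_mul).mp h with h' | h' <;> rw [X_dvd_X] at h' <;>
        exact absurd h' (by decide)
    · exact h
  obtain ⟨a, ha⟩ := h1
  obtain ⟨b, hb⟩ := h2
  have h0 : q₀ - p₀ = X 0 * a + X 0 * b := by
    have hne : (X 1 * X 2 : MvPolynomial (Fin 3) k) ≠ 0 :=
      mul_ne_zero (X_ne_zero 1) (X_ne_zero 2)
    apply mul_left_cancel₀ hne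
    linear_combination -hdet + X 0 * X 2 * ha + X 0 * X 1 * hb
  have hAB : (!![X 0, X 0, q₀; X 1, 0, q₁; 0, X 2, q₂] : Matrix (Fin 3) (Fin 3) (MvPolynomial (Fin 3) k))
      = !![X 0, X 0, p₀; X 1, 0, p₁; 0, X 2, p₂] * !![1, 0, a; 0, 1, b; 0, 0, 1] := by
    refine Matrix.ext fun i j => ?_
    fin_cases i <;> fin_cases j <;>
      simp [Matrix.mul_apply, Fin.sum_univ_three, Matrix.vecHead, Matrix.vecTail] <;>
      first
        | linear_combination h0
        | linear_combination ha
        | linear_combination hb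
  refine ⟨⟨a, b, hAB⟩, ?_⟩
  have hUV : (!![1, 0, a; 0, 1, b; 0, 0, 1] : Matrix (Fin 3) (Fin 3) (MvPolynomial (Fin 3) k))
      * !![1, 0, -a; 0, 1, -b; 0, 0, 1] = 1 := by
    refine Matrix.ext fun i j => ?_
    fin_cases i <;> fin_cases j <;>
      simp [Matrix.mul_apply, Fin.sum_univ_three, Matrix.one_apply, Matrix.vecHead, Matrix.vecTail]
  have hr : LinearMap.range
      (Matrix.mulVecLin (!![X 0, X 0, q₀; X 1, 0, q₁; 0, X 2, q₂] : Matrix (Fin 3) (Fin 3) (MvPolynomial (Fin 3) k)))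
      = LinearMap.range
      (Matrix.mulVecLin (!![X 0, X 0, p₀; X 1, 0, p₁; 0, X 2, p₂] : Matrix (Fin 3) (Fin 3) (MvPolynomial (Fin 3) k))) := by
    rw [hAB, Matrix.mulVecLin_mul]
    apply LinearMap.range_comp_of_range_eq_top
    rw [LinearMap.range_eq_top]
    intro v
    refine ⟨(!![1, 0, -a; 0, 1, -b; 0, 0, 1] : Matrix (Fin 3) (Fin 3) (MvPolynomial (Fin 3) k)).mulVec v, ?_⟩
    rw [Matrix.mulVecLin_apply, Matrix.mulVec_mulVec, hUV, Matrix.one_mulVec]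
  rw [hr]
  exact ⟨LinearEquiv.refl _ _⟩
end

section
/- The sequence 0 → R(−3)² → R(−2)³ → I → 0 is exact, where the first map is given by the transpose of α = [[x₀, x₀], [x₁, 0], [0, x₂]] (i.e., v ↦ αᵀ-action: (a,b) ↦ (x₀a + x₀b, x₁a, x₂b) suitably arranged) and the second map sends (g₀,g₁,g₂) to g₀x₁x₂ − g₁x₀x₂ − g₂x₀x₁, with I = (x₀x₁, x₀x₂, x₁x₂) ⊂ R = k[x₀,x₁,x₂]. -/
open MvPolynomial

noncomputable def alphaT (k : Type*) [Field k] :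
    (Fin 2 → MvPolynomial (Fin 3) k) →ₗ[MvPolynomial (Fin 3) k]
      (Fin 3 → MvPolynomial (Fin 3) k) :=
  (!![X 0, X 0; X 1, 0; 0, X 2] : Matrix (Fin 3) (Fin 2) (MvPolynomial (Fin 3) k)).mulVecLin

noncomputable def minorsMap (k : Type*) [Field k] :
    (Fin 3 → MvPolynomial (Fin 3) k) →ₗ[MvPolynomial (Fin 3) k] MvPolynomial (Fin 3) k :=
  LinearMap.smulRight (LinearMap.proj 0) (X 1 * X 2)
    - LinearMap.smulRight (LinearMap.proj 1) (X 0 * X 2)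
    - LinearMap.smulRight (LinearMap.proj 2) (X 0 * X 1)

lemma prime_X_fin3 (k : Type*) [Field k] (i : Fin 3) :
    Prime (X i : MvPolynomial (Fin 3) k) := by
  have h0 : Prime (X 0 : MvPolynomial (Fin 3) k) := by
    rw [← MulEquiv.prime_iff (MvPolynomial.finSuccEquiv k 2).toMulEquiv]
    simpa [MvPolynomial.finSuccEquiv_X_zero] using
      Polynomial.prime_X (R := MvPolynomial (Fin 2) k)
  have := (MulEquiv.prime_iff (MvPolynomial.renameEquiv k (Equiv.swap (0 : Fin 3) i)).toMulEquiv).mpr h0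
  simpa using this

lemma alphaT_apply (k : Type*) [Field k] (v : Fin 2 → MvPolynomial (Fin 3) k) :
    (alphaT k) v = ![X 0 * v 0 + X 0 * v 1, X 1 * v 0, X 2 * v 1] := by
  funext j
  fin_cases j <;>
    simp [alphaT, Matrix.mulVecLin_apply, Matrix.mulVec, dotProduct, Fin.sum_univ_two]

lemma minorsMap_apply (k : Type*) [Field k] (g : Fin 3 → MvPolynomial (Fin 3) k) :
    minorsMap k g = g 0 * (X 1 * X 2) - g 1 * (X 0 * X 2) - g 2 * (X 0 * X 1) := by
  simp [minorsMap, smul_eq_mul]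

/-- Hilbert–Burch resolution of the ideal of the three coordinate points. -/
theorem hilbert_burch_resolution (k : Type*) [Field k] :
    Function.Injective (alphaT k) ∧
    LinearMap.ker (minorsMap k) = LinearMap.range (alphaT k) ∧
    LinearMap.range (minorsMap k) =
      Ideal.span ({X 0 * X 1, X 0 * X 2, X 1 * X 2} : Set (MvPolynomial (Fin 3) k)) := by
  have hXne : ∀ i : Fin 3, (X i : MvPolynomial (Fin 3) k) ≠ 0 := fun i => X_ne_zero i
  refine ⟨?_, ?_, ?_⟩
  · -- injectivity
    rw [injective_iff_map_eq_zero]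
    intro v hv
    rw [alphaT_apply] at hv
    have h1 : X 1 * v 0 = 0 := congrFun hv 1
    have h2 : X 2 * v 1 = 0 := congrFun hv 2
    have hv0 : v 0 = 0 := by
      rcases mul_eq_zero.mp h1 with h | h
      · exact absurd h (hXne 1)
      · exact h
    have hv1 : v 1 = 0 := by
      rcases mul_eq_zero.mp h2 with h | h
      · exact absurd h (hXne 2)
      · exact h
    funext j; fin_cases j <;> assumption
  · -- ker = range
    ext g
    constructor
    · intro hg
      rw [LinearMap.mem_ker, minorsMap_apply] at hg
      -- g 0 * (X1 X2) = X 0 * (g 1 * X 2 + g 2 * X 1)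
      have key : g 0 * (X 1 * X 2) = X 0 * (g 1 * X 2 + g 2 * X 1) := by
        rw [sub_sub, sub_eq_zero] at hg
        rw [hg]; ring
      have h0 := prime_X_fin3 k 0
      have h1 := prime_X_fin3 k 1
      have hdvd0 : (X 0 : MvPolynomial (Fin 3) k) ∣ g 0 := by
        have : (X 0 : MvPolynomial (Fin 3) k) ∣ g 0 * (X 1 * X 2) := ⟨_, key⟩
        rcases h0.dvd_mul.mp this with h | h
        · exact h
        · rcases h0.dvd_mul.mp h with h | h <;> simp [X_dvd_X] at h
      obtain ⟨h, hh⟩ := hdvd0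
      have key2 : h * (X 1 * X 2) = g 1 * X 2 + g 2 * X 1 := by
        apply mul_left_cancel₀ (hXne 0)
        rw [← key, hh]; ring
      have hdvd1 : (X 1 : MvPolynomial (Fin 3) k) ∣ g 1 := by
        have : (X 1 : MvPolynomial (Fin 3) k) ∣ g 1 * X 2 :=
          ⟨h * X 2 - g 2, by linear_combination -key2⟩
        rcases h1.dvd_mul.mp this with h | h
        · exact h
        · simp [X_dvd_X] at h
      obtain ⟨a, ha⟩ := hdvd1
      have hg2 : g 2 = X 2 * (h - a) := by
        apply mul_left_cancel₀ (hXne 1)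
        show X 1 * g 2 = X 1 * (X 2 * (h - a))
        linear_combination -key2 - X 2 * ha
      refine ⟨![a, h - a], ?_⟩
      rw [alphaT_apply]
      funext j
      fin_cases j
      · show X 0 * a + X 0 * (h - a) = g 0
        rw [hh]; ring
      · show X 1 * a = g 1
        rw [ha]
      · show X 2 * (h - a) = g 2
        rw [hg2]
    · rintro ⟨v, rfl⟩
      rw [LinearMap.mem_ker, minorsMap_apply, alphaT_apply]
      show (X 0 * v 0 + X 0 * v 1) * (X 1 * X 2) - X 1 * v 0 * (X 0 * X 2)
          - X 2 * v 1 * (X 0 * X 1) = 0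
      ring
  · -- range = span
    apply le_antisymm
    · rintro p ⟨g, rfl⟩
      rw [minorsMap_apply]
      have m1 : (X 0 * X 1 : MvPolynomial (Fin 3) k) ∈
          Ideal.span ({X 0 * X 1, X 0 * X 2, X 1 * X 2} : Set (MvPolynomial (Fin 3) k)) :=
        Ideal.subset_span (by simp)
      have m2 : (X 0 * X 2 : MvPolynomial (Fin 3) k) ∈
          Ideal.span ({X 0 * X 1, X 0 * X 2, X 1 * X 2} : Set (MvPolynomial (Fin 3) k)) :=
        Ideal.subset_span (by simp)
      have m3 : (X 1 * X 2 : MvPolynomial (Fin 3) k) ∈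
          Ideal.span ({X 0 * X 1, X 0 * X 2, X 1 * X 2} : Set (MvPolynomial (Fin 3) k)) :=
        Ideal.subset_span (by simp)
      exact sub_mem (sub_mem (Ideal.mul_mem_left _ _ m3) (Ideal.mul_mem_left _ _ m2))
        (Ideal.mul_mem_left _ _ m1)
    · rw [Ideal.span_le]
      rintro p hp
      simp only [Set.mem_insert_iff, Set.mem_singleton_iff] at hp
      rcases hp with rfl | rfl | rfl
      · exact ⟨![0, 0, -1], by rw [minorsMap_apply]; show (0:MvPolynomial (Fin 3) k) * _ - 0 * _ - (-1) * _ = _; ring⟩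
      · exact ⟨![0, -1, 0], by rw [minorsMap_apply]; show (0:MvPolynomial (Fin 3) k) * _ - (-1) * _ - 0 * _ = _; ring⟩
      · exact ⟨![1, 0, 0], by rw [minorsMap_apply]; show (1:MvPolynomial (Fin 3) k) * _ - 0 * _ - 0 * _ = _; ring⟩
end
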